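/- arXiv:1703.06045 — 4 statements merged into one kernel-verified Lean document; each statement's English description precedes it below -/
import Mathlib

section
/- Let G be a simple graph on vertex set Fin n with n ≥ 1, let n_i denote the degree of vertex i, and let c = Σ_{i} 2^{n − n_i − 1}. For i, j ∈ Fin n and b : Bool define p_{ij}(b) ∈ ℝ by: p_{ii}(true) = 1 and p_{ii}(false) = 0; if j is adjacent to i then p_{ij}(true) = 0 and p_{ij}(false) = 1; otherwise p_{ij}(b) = 1/2. Define S(x) = (1/c) · Σ_{i} 2^{n − n_i − 1} · Π_{j} p_{ij}(x j) for x : Fin n → Bool. Then for every configuration x, c · S(x) = |I(x)|, where I(x) = { i : x i = true and for every j adjacent to i, x j = false }. -/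
/-- The leaf distribution `p_{ij}` from the independent-set reduction:
`p_{ii}(true) = 1`, `p_{ii}(false) = 0`; if `j` is adjacent to `i` then
`p_{ij}(true) = 0`, `p_{ij}(false) = 1`; otherwise `p_{ij} ≡ 1/2`. -/
noncomputable def pfun {n : ℕ} (G : SimpleGraph (Fin n)) [DecidableRel G.Adj]
    (i j : Fin n) (b : Bool) : ℝ :=
  if j = i then (if b then 1 else 0)
  else if G.Adj i j then (if b then 0 else 1)
  else 1 / 2

/-- The normalizing constant `c = Σ_i 2^(n - n_i - 1)` where `n_i` is the degree of `i`. -/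
noncomputable def cval {n : ℕ} (G : SimpleGraph (Fin n)) [DecidableRel G.Adj] : ℝ :=
  ∑ i, (2 : ℝ) ^ (n - G.degree i - 1)

/-- The SPN value `S(x) = (1/c) · Σ_i 2^(n - n_i - 1) · Π_j p_{ij}(x j)`. -/
noncomputable def Sval {n : ℕ} (G : SimpleGraph (Fin n)) [DecidableRel G.Adj]
    (x : Fin n → Bool) : ℝ :=
  (1 / cval G) * ∑ i, (2 : ℝ) ^ (n - G.degree i - 1) * ∏ j, pfun G i j (x j)

/-- For every configuration `x`, `c · S(x) = |I(x)|`, where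
`I(x) = {i | x i = true ∧ ∀ j adjacent to i, x j = false}`. -/
theorem stmt2 {n : ℕ} (hn : 1 ≤ n) (G : SimpleGraph (Fin n)) [DecidableRel G.Adj]
    (x : Fin n → Bool) :
    cval G * Sval G x =
      (({i : Fin n | x i = true ∧ ∀ j, G.Adj i j → x j = false} : Set (Fin n)).ncard : ℝ) := by
  classical
  have hc : cval G ≠ 0 := by
    have : 0 < cval G := by
      unfold cval
      apply Finset.sum_pos
      · intro i _; positivity
      · haveI : NeZero n := ⟨by omega⟩; exact Finset.univ_nonempty
    linarith
  have key : ∀ i : Fin n, (2 : ℝ) ^ (n - G.degree i - 1) * ∏ j, pfun G i j (x j) =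
      if (x i = true ∧ ∀ j, G.Adj i j → x j = false) then 1 else 0 := by
    intro i
    by_cases h1 : x i = true
    · by_cases h2 : ∀ j, G.Adj i j → x j = false
      · rw [if_pos ⟨h1, h2⟩]
        set A : Finset (Fin n) := insert i (G.neighborFinset i) with hA
        have hprod : ∏ j, pfun G i j (x j) = ∏ j, (if j ∈ A then (1:ℝ) else 1/2) := by
          apply Finset.prod_congr rfl
          intro j _
          unfold pfun
          by_cases hji : j = i
          · subst hji
            simp [h1, hA]
          · by_cases hadj : G.Adj i j
            · have := h2 j hadj
              simp [hji, hadj, this, hA, SimpleGraph.mem_neighborFinset]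
            · simp [hji, hadj, hA, SimpleGraph.mem_neighborFinset]
        rw [hprod, ← Finset.prod_filter_mul_prod_filter_not Finset.univ (· ∈ A)]
        have e1 : ∏ j ∈ Finset.univ.filter (· ∈ A), (if j ∈ A then (1:ℝ) else 1/2) = 1 := by
          apply Finset.prod_eq_one
          intro j hj
          simp only [Finset.mem_filter] at hj
          simp [hj.2]
        have e2 : ∏ j ∈ Finset.univ.filter (fun j => ¬ j ∈ A), (if j ∈ A then (1:ℝ) else 1/2)
            = (1/2 : ℝ) ^ (n - G.degree i - 1) := by
          rw [Finset.prod_congr rfl (fun j hj => ?_), Finset.prod_const]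
          · congr 1
            have hcardA : A.card = G.degree i + 1 := by
              rw [hA, Finset.card_insert_of_notMem (by simp), SimpleGraph.card_neighborFinset_eq_degree]
            have : (Finset.univ.filter (fun j => ¬ j ∈ A)).card = n - A.card := by
              rw [Finset.filter_not, Finset.card_sdiff_of_subset (Finset.filter_subset _ _)]
              simp [Finset.filter_univ_mem]
            rw [this, hcardA, Nat.sub_sub]
          · simp only [Finset.mem_filter] at hj
            simp [hj.2]
        rw [e1, e2, one_mul, ← mul_pow]
        norm_num
      · rw [if_neg (by tauto)]
        push_neg at h2
        obtain ⟨j, hadj, hxj⟩ := h2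
        have : ∏ k, pfun G i k (x k) = 0 := by
          apply Finset.prod_eq_zero (Finset.mem_univ j)
          have hji : j ≠ i := fun h => G.irrefl (h ▸ hadj)
          simp [pfun, hji, hadj, (by simpa using hxj : x j = true)]
        rw [this, mul_zero]
    · rw [if_neg (by tauto)]
      have : ∏ k, pfun G i k (x k) = 0 := by
        apply Finset.prod_eq_zero (Finset.mem_univ i)
        simp [pfun, (by simpa using h1 : x i = false)]
      rw [this, mul_zero]
  unfold Sval
  rw [← mul_assoc, mul_one_div, div_self hc, one_mul]
  rw [Finset.sum_congr rfl (fun i _ => key i), Finset.sum_boole]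
  congr 1
  rw [Set.ncard_eq_toFinset_card']
  congr 1
  ext i
  simp
end

section
/- Let G be a simple graph on vertex set Fin n with n ≥ 1, let n_i denote the degree of vertex i, let c = Σ_{i} 2^{n − n_i − 1}, and let S(x) = (1/c) · Σ_{i} 2^{n − n_i − 1} · Π_{j} p_{ij}(x j) with p_{ij} as follows: p_{ii}(true) = 1, p_{ii}(false) = 0; p_{ij}(true) = 0, p_{ij}(false) = 1 if j is adjacent to i; p_{ij} ≡ 1/2 otherwise. Then for every natural number v, G has an independent set of cardinality at least v if and only if max over x : Fin n → Bool of S(x) is at least v/c; moreover, c · max_x S(x) equals the independence number of G. -/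
def Dset {n : ℕ} (G : SimpleGraph (Fin n)) [DecidableRel G.Adj] (x : Fin n → Bool) :
    Finset (Fin n) :=
  Finset.univ.filter (fun i => x i = true ∧ ∀ j, G.Adj i j → x j = false)

lemma term_eq {n : ℕ} (G : SimpleGraph (Fin n)) [DecidableRel G.Adj]
    (x : Fin n → Bool) (i : Fin n) :
    (2:ℝ)^(n - G.degree i - 1) * ∏ j, pfun G i j (x j)
      = if i ∈ Dset G x then 1 else 0 := by
  by_cases hxi : x i = true
  · by_cases hadj : ∀ j, G.Adj i j → x j = false
    · have hmem : i ∈ Dset G x := Finset.mem_filter.mpr ⟨Finset.mem_univ i, hxi, hadj⟩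
      rw [if_pos hmem]
      have hprod : ∏ j, pfun G i j (x j)
          = ∏ j, (if j ∈ insert i (G.neighborFinset i) then (1:ℝ) else 1/2) := by
        refine Finset.prod_congr rfl fun j _ => ?_
        by_cases hji : j = i
        · subst hji; simp [pfun, hxi]
        · by_cases hA : G.Adj i j
          · simp [pfun, hji, hA, hadj j hA]
          · simp [pfun, hji, hA]
      rw [hprod, Finset.prod_ite, Finset.prod_const_one, one_mul, Finset.prod_const]
      have hcard : (Finset.univ.filter
          (fun j => ¬ j ∈ insert i (G.neighborFinset i))).card = n - G.degree i - 1 := by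
        have : (Finset.univ.filter (fun j => ¬ j ∈ insert i (G.neighborFinset i)))
            = (insert i (G.neighborFinset i))ᶜ := by ext j; simp
        rw [this, Finset.card_compl]
        rw [Finset.card_insert_of_notMem (by simp), SimpleGraph.card_neighborFinset_eq_degree]
        simp [Nat.sub_sub, Nat.add_comm]
      rw [hcard, ← mul_pow]
      norm_num
    · push_neg at hadj
      obtain ⟨j, hA, hxj⟩ := hadj
      rw [Bool.ne_false_iff] at hxj
      have hne : ¬ (j = i) := fun h => G.irrefl (h ▸ hA)
      have h0 : pfun G i j (x j) = 0 := by simp [pfun, hne, hA, hxj]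
      rw [Finset.prod_eq_zero (Finset.mem_univ j) h0, mul_zero,
        if_neg (by simp [Dset, hxi]; exact ⟨j, hA, hxj⟩)]
  · have h0 : pfun G i i (x i) = 0 := by simp [pfun, hxi]
    rw [Finset.prod_eq_zero (Finset.mem_univ i) h0, mul_zero,
      if_neg (by simp [Dset, hxi])]

lemma Sval_eq {n : ℕ} (G : SimpleGraph (Fin n)) [DecidableRel G.Adj] (x : Fin n → Bool) :
    Sval G x = ((Dset G x).card : ℝ) / cval G := by
  rw [Sval, Finset.sum_congr rfl (fun i _ => term_eq G x i), Finset.sum_boole]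
  rw [one_div, inv_mul_eq_div]
  simp

lemma Dset_indep {n : ℕ} (G : SimpleGraph (Fin n)) [DecidableRel G.Adj] (x : Fin n → Bool) :
    ∀ i ∈ (Dset G x : Set (Fin n)), ∀ j ∈ (Dset G x : Set (Fin n)), ¬ G.Adj i j := by
  intro i hi j hj hA
  simp only [Finset.coe_filter, Dset, Set.mem_setOf_eq] at hi hj
  exact absurd hj.2.1 (by simp [hi.2.2 j hA])

lemma indep_le {n : ℕ} (G : SimpleGraph (Fin n)) [DecidableRel G.Adj]
    (s : Set (Fin n)) (hs : ∀ i ∈ s, ∀ j ∈ s, ¬ G.Adj i j) :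
    s.ncard ≤ (Dset G (fun j => by classical exact decide (j ∈ s))).card := by
  classical
  set x : Fin n → Bool := fun j => by classical exact decide (j ∈ s) with hx
  have hsub : s ⊆ (Dset G x : Set (Fin n)) := by
    intro i hi
    simp only [Finset.coe_filter, Dset, Set.mem_setOf_eq]
    refine ⟨Finset.mem_univ i, by simp [hx, hi], fun j hA => ?_⟩
    by_contra h
    rw [Bool.not_eq_false] at h
    have hjs : j ∈ s := by simpa [hx] using h
    exact hs i hi j hjs hA
  calc s.ncard ≤ (Dset G x : Set (Fin n)).ncard :=
        Set.ncard_le_ncard hsub (Finset.finite_toSet _)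
    _ = (Dset G x).card := by simp

/-- `G` has an independent set of cardinality at least `v` iff
`max_x S(x) ≥ v/c`; moreover `c · max_x S(x)` equals the independence number of `G`. -/
theorem stmt3 {n : ℕ} (hn : 1 ≤ n) (G : SimpleGraph (Fin n)) [DecidableRel G.Adj] :
    (∀ v : ℕ,
      (∃ s : Set (Fin n), (∀ i ∈ s, ∀ j ∈ s, ¬ G.Adj i j) ∧ v ≤ s.ncard) ↔
        (v : ℝ) / cval G ≤ ⨆ x : Fin n → Bool, Sval G x) ∧
    cval G * (⨆ x : Fin n → Bool, Sval G x) =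
      ((⨆ s ∈ {s : Set (Fin n) | ∀ i ∈ s, ∀ j ∈ s, ¬ G.Adj i j}, s.ncard : ℕ) : ℝ) := by
  classical
  haveI : Nonempty (Fin n) := Fin.pos_iff_nonempty.mp hn
  have hc : 0 < cval G :=
    Finset.sum_pos (fun i _ => by positivity) Finset.univ_nonempty
  obtain ⟨x₀, hx₀⟩ := Finite.exists_max (fun x : Fin n → Bool => (Dset G x).card)
  set M := (Dset G x₀).card with hM
  -- the real sup
  have hR : (⨆ x : Fin n → Bool, Sval G x) = (M : ℝ) / cval G := by
    apply le_antisymm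
    · refine ciSup_le fun x => ?_
      rw [Sval_eq]
      gcongr
      exact_mod_cast hx₀ x
    · rw [← Sval_eq]
      exact le_ciSup (Set.Finite.bddAbove (Set.finite_range _)) x₀
  -- the nat sup
  have hbound : ∀ s : Set (Fin n), s.ncard ≤ n := fun s => by
    calc s.ncard ≤ (Set.univ : Set (Fin n)).ncard :=
          Set.ncard_le_ncard (Set.subset_univ s) Set.finite_univ
      _ = n := by simp [Set.ncard_univ]
  have hα : (⨆ s ∈ {s : Set (Fin n) | ∀ i ∈ s, ∀ j ∈ s, ¬ G.Adj i j}, s.ncard) = M := by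
    apply le_antisymm
    · exact ciSup_le' fun s => ciSup_le' fun hs => le_trans (indep_le G s hs) (hx₀ _)
    · have hmem : (↑(Dset G x₀) : Set (Fin n)) ∈
          {s : Set (Fin n) | ∀ i ∈ s, ∀ j ∈ s, ¬ G.Adj i j} := Dset_indep G x₀
      have h1 : M = (⨆ _ : (↑(Dset G x₀) : Set (Fin n)) ∈
          {s : Set (Fin n) | ∀ i ∈ s, ∀ j ∈ s, ¬ G.Adj i j},
          (↑(Dset G x₀) : Set (Fin n)).ncard) := by
        rw [ciSup_pos hmem, Set.ncard_coe_finset]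
      rw [h1]
      exact le_ciSup (f := fun s : Set (Fin n) => ⨆ _ : s ∈ _, s.ncard)
        ⟨n, by rintro m ⟨s, rfl⟩; exact ciSup_le' fun _ => hbound s⟩ _
  constructor
  · intro v
    constructor
    · rintro ⟨s, hs, hv⟩
      rw [hR, div_le_div_iff_of_pos_right hc]
      exact_mod_cast le_trans hv (le_trans (indep_le G s hs) (hx₀ _))
    · intro h
      rw [hR, div_le_div_iff_of_pos_right hc] at h
      exact ⟨↑(Dset G x₀), Dset_indep G x₀, by rw [Set.ncard_coe_finset]; exact_mod_cast h⟩
  · rw [hR, mul_div_cancel₀ _ (ne_of_gt hc), hα]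
end

section
/- Let m ≥ 2 and s' ≥ 1 be integers and 0 ≤ ε < 1 a real number, and set q = 1 + ⌊(ln 2 · m · (s'+2)^ε)^{1/(1−ε)}⌋ (a positive integer). Then for every real s with 0 ≤ s ≤ q·(s'+2), we have 2^{s^ε} · ((m−1)/m)^q < 1; equivalently, (m/(m−1))^q > 2^{s^ε}. -/
/-- Let `m ≥ 2`, `s' ≥ 1` be integers, `0 ≤ ε < 1` real, and
`q = 1 + ⌊(ln 2 · m · (s'+2)^ε)^(1/(1−ε))⌋`. Then for every real `0 ≤ s ≤ q·(s'+2)`,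
`2^(s^ε) · ((m−1)/m)^q < 1`; equivalently `(m/(m−1))^q > 2^(s^ε)`. -/
theorem stmt10 (m s' : ℕ) (hm : 2 ≤ m) (hs' : 1 ≤ s') (ε : ℝ) (hε0 : 0 ≤ ε) (hε1 : ε < 1)
    (q : ℕ)
    (hq : q = 1 + ⌊(Real.log 2 * (m : ℝ) * ((s' : ℝ) + 2) ^ ε) ^ (1 / (1 - ε))⌋₊)
    (s : ℝ) (hs0 : 0 ≤ s) (hs : s ≤ (q : ℝ) * ((s' : ℝ) + 2)) :
    (2 : ℝ) ^ (s ^ ε) * (((m : ℝ) - 1) / (m : ℝ)) ^ q < 1 ∧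
      (2 : ℝ) ^ (s ^ ε) < ((m : ℝ) / ((m : ℝ) - 1)) ^ q := by
  have hm2 : (2:ℝ) ≤ (m:ℝ) := by exact_mod_cast hm
  have hm0 : (0:ℝ) < (m:ℝ) := by linarith
  have hm1 : (0:ℝ) < (m:ℝ) - 1 := by linarith
  have h1ε : (0:ℝ) < 1 - ε := by linarith
  have hs'2 : (0:ℝ) < (s':ℝ) + 2 := by positivity
  have hlog2 : 0 < Real.log 2 := Real.log_pos one_lt_two
  set A : ℝ := Real.log 2 * (m : ℝ) * ((s' : ℝ) + 2) ^ ε with hA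
  have hApos : 0 < A := by positivity
  have hq0 : 0 < q := by rw [hq]; omega
  have hqpos : (0:ℝ) < (q:ℝ) := by exact_mod_cast hq0
  have hqA : A ^ (1/(1-ε)) < (q:ℝ) := by
    have h := Nat.lt_floor_add_one (A ^ (1/(1-ε)))
    rw [hq]
    push_cast
    linarith
  have hkey : A < (q:ℝ) ^ (1 - ε) := by
    have h := Real.rpow_lt_rpow (Real.rpow_nonneg hApos.le _) hqA h1ε
    have e : (A ^ (1/(1-ε))) ^ (1-ε) = A := by
      rw [← Real.rpow_mul hApos.le, one_div, inv_mul_cancel₀ h1ε.ne', Real.rpow_one]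
    rw [e] at h
    exact h
  have hlog : 1/(m:ℝ) ≤ Real.log ((m:ℝ)/((m:ℝ)-1)) := by
    have h := Real.log_le_sub_one_of_pos (x := ((m:ℝ)-1)/(m:ℝ)) (by positivity)
    rw [Real.log_div hm1.ne' hm0.ne'] at h
    rw [Real.log_div hm0.ne' hm1.ne']
    have e : ((m:ℝ)-1)/(m:ℝ) - 1 = -(1/(m:ℝ)) := by field_simp; ring
    linarith [e ▸ h]
  have hsε : s ^ ε ≤ ((q:ℝ) * ((s':ℝ)+2)) ^ ε := Real.rpow_le_rpow hs0 hs hε0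
  have hmulε : ((q:ℝ) * ((s':ℝ)+2)) ^ ε = (q:ℝ)^ε * ((s':ℝ)+2)^ε :=
    Real.mul_rpow hqpos.le hs'2.le
  have hqε : (0:ℝ) < (q:ℝ)^ε := Real.rpow_pos_of_pos hqpos ε
  have hAq : A * (q:ℝ)^ε < (q:ℝ) := by
    calc A * (q:ℝ)^ε < (q:ℝ)^(1-ε) * (q:ℝ)^ε := mul_lt_mul_of_pos_right hkey hqε
      _ = (q:ℝ) := by
          rw [← Real.rpow_add hqpos]; norm_num
  have hmain : s ^ ε * Real.log 2 < (q:ℝ) * Real.log ((m:ℝ)/((m:ℝ)-1)) := by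
    have e1 : A * (q:ℝ)^ε / (m:ℝ) = Real.log 2 * ((q:ℝ)*((s':ℝ)+2))^ε := by
      rw [hmulε, hA]; field_simp
    have h1 : s ^ ε * Real.log 2 ≤ A * (q:ℝ)^ε / (m:ℝ) := by
      rw [e1, mul_comm (s^ε)]
      exact mul_le_mul_of_nonneg_left hsε hlog2.le
    have h2 : A * (q:ℝ)^ε / (m:ℝ) < (q:ℝ) / (m:ℝ) := by gcongr
    have h3 : (q:ℝ)/(m:ℝ) ≤ (q:ℝ) * Real.log ((m:ℝ)/((m:ℝ)-1)) := by
      rw [div_eq_mul_inv, ← one_div]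
      exact mul_le_mul_of_nonneg_left hlog hqpos.le
    linarith
  have hb : (0:ℝ) < (m:ℝ)/((m:ℝ)-1) := by positivity
  have hexp : (2:ℝ) ^ (s^ε) < ((m:ℝ)/((m:ℝ)-1)) ^ q := by
    rw [← Real.rpow_natCast ((m:ℝ)/((m:ℝ)-1)) q,
        Real.rpow_def_of_pos (by norm_num : (0:ℝ) < 2),
        Real.rpow_def_of_pos hb]
    exact Real.exp_lt_exp.mpr (by linear_combination hmain)
  refine ⟨?_, hexp⟩
  have hc : (0:ℝ) < ((m:ℝ)/((m:ℝ)-1))^q := by positivity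
  have e : (((m:ℝ)-1)/(m:ℝ)) ^ q = (((m:ℝ)/((m:ℝ)-1))^q)⁻¹ := by
    rw [← inv_pow, inv_div]
  rw [e, ← div_eq_mul_inv, div_lt_one hc]
  exact hexp
end

section
/- Fix a finite index set ι and for each i ∈ ι a finite nonempty type α i, and consider SPNs over ι as defined inductively (Leaf, Sum with convex weights, Prod over disjoint scopes). If S is an SPN whose scope is all of ι and such that every leaf function p occurring in S satisfies Σ_{v : α i} p v = 1, then Σ over all configurations x : ∀ i, α i of S(x) equals 1. -/
open scoped NNReal

/-- Sum-product networks over index set `ι` with variable domains `α i`, indexed by scope. -/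
inductive SPN (ι : Type) (α : ι → Type) : Set ι → Type where
  | leaf (i : ι) (p : α i → ℝ≥0) : SPN ι α {i}
  | sum {sc : Set ι} (t : ℕ) (ht : 1 ≤ t) (child : Fin t → SPN ι α sc)
      (w : Fin t → ℝ≥0) (hw : ∑ j, w j = 1) : SPN ι α sc
  | prod (t : ℕ) (scs : Fin t → Set ι)
      (hd : Pairwise fun j k => Disjoint (scs j) (scs k))
      (child : ∀ j, SPN ι α (scs j)) : SPN ι α (⋃ j, scs j)

/-- The value of an SPN at a configuration. -/
noncomputable def SPN.eval {ι : Type} {α : ι → Type} :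
    {sc : Set ι} → SPN ι α sc → (∀ i, α i) → ℝ≥0
  | _, .leaf i p, x => p (x i)
  | _, .sum _ _ child w _, x => ∑ j, w j * (child j).eval x
  | _, .prod _ _ _ child, x => ∏ j, (child j).eval x


/-- Every leaf distribution occurring in the SPN is normalized. -/
def SPN.normalized {ι : Type} {α : ι → Type} [∀ i, Fintype (α i)] :
    {sc : Set ι} → SPN ι α sc → Prop
  | _, .leaf i p => ∑ v, p v = 1
  | _, .sum _ _ child _ _ => ∀ j, (child j).normalized
  | _, .prod _ _ _ child => ∀ j, (child j).normalized

open scoped Classical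

section Aux

variable {ι : Type} [Fintype ι] {α : ι → Type} [∀ i, Fintype (α i)] [∀ i, Nonempty (α i)]

set_option linter.unusedSectionVars false

/-- Sums over `univ` do not depend on the `Fintype` instance. -/
lemma sum_univ_inst {β : Type} (i1 i2 : Fintype β) (f : β → ℝ≥0) :
    @Finset.sum β ℝ≥0 _ (@Finset.univ β i1) f = @Finset.sum β ℝ≥0 _ (@Finset.univ β i2) f := by
  cases Subsingleton.elim i1 i2; rfl

/-- Patch a partial configuration on `sc` with arbitrary values outside. -/
noncomputable def patch (sc : Set ι) (x : ∀ i : sc, α i) : ∀ i, α i :=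
  fun i => if h : i ∈ sc then x ⟨i, h⟩ else Classical.arbitrary _

lemma eval_congr : ∀ {sc : Set ι} (S : SPN ι α sc) {x y : ∀ i, α i},
    (∀ i ∈ sc, x i = y i) → S.eval x = S.eval y := by
  intro sc S
  induction S with
  | leaf i p =>
      intro x y h
      simp [SPN.eval, h i rfl]
  | sum t ht child w hw ih =>
      intro x y h
      simp only [SPN.eval]
      exact Finset.sum_congr rfl fun j _ => by rw [ih j h]
  | prod t scs hd child ih =>
      intro x y h
      simp only [SPN.eval]
      exact Finset.prod_congr rfl fun j _ =>
        ih j fun i hi => h i (Set.mem_iUnion.2 ⟨j, hi⟩)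

/-- Splitting a configuration on a disjoint union. -/
noncomputable def piEquiv (t : ℕ) (scs : Fin t → Set ι)
    (hd : Pairwise fun j k => Disjoint (scs j) (scs k)) :
    (∀ i : (⋃ j, scs j : Set ι), α i) ≃ ∀ j, ∀ i : scs j, α i where
  toFun f j i := f ⟨i, Set.mem_iUnion.2 ⟨j, i.2⟩⟩
  invFun g i := g (Set.mem_iUnion.1 i.2).choose ⟨i.1, (Set.mem_iUnion.1 i.2).choose_spec⟩
  left_inv f := rfl
  right_inv g := by
    funext j iv
    obtain ⟨i, hi⟩ := iv
    show g (Set.mem_iUnion.1 (Set.mem_iUnion.2 ⟨j, hi⟩)).choose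
        ⟨i, (Set.mem_iUnion.1 (Set.mem_iUnion.2 ⟨j, hi⟩)).choose_spec⟩ = g j ⟨i, hi⟩
    have key : ∀ (c : Fin t) (hc : c = j) (sp : i ∈ scs c), g c ⟨i, sp⟩ = g j ⟨i, hi⟩ := by
      rintro c rfl sp; rfl
    refine key _ ?_ _
    by_contra hne
    exact Set.disjoint_left.1 (hd hne)
      (Set.mem_iUnion.1 (Set.mem_iUnion.2 ⟨j, hi⟩)).choose_spec hi

lemma sum_patch_eval : ∀ {sc : Set ι} (S : SPN ι α sc), S.normalized →
    ∑ x : ∀ i : sc, α i, S.eval (patch sc x) = 1 := by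
  intro sc S
  induction S with
  | leaf i p =>
      intro hS
      have hbij : Function.Bijective
          (fun (f : ∀ j : ({i} : Set ι), α j) => f ⟨i, rfl⟩) := by
        constructor
        · intro f g h
          funext jv
          obtain ⟨j, hj⟩ := jv
          cases hj
          exact h
        · intro v
          exact ⟨fun j => cast (congrArg α j.2).symm v, rfl⟩
      refine Eq.trans (sum_univ_inst _ inferInstance _) ?_
      refine (Fintype.sum_bijective _ hbij _ p fun x => ?_).trans hS
      show p (patch {i} x i) = _
      simp only [patch]
      rw [dif_pos (show i ∈ ({i} : Set ι) from rfl)]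
  | sum t ht child w hw ih =>
      intro hS
      simp only [SPN.eval]
      rw [Finset.sum_comm]
      refine Eq.trans (Finset.sum_congr rfl fun j _ => ?_) hw
      rw [← Finset.mul_sum, ih j (hS j), mul_one]
  | prod t scs hd child ih =>
      intro hS
      simp only [SPN.eval]
      refine Eq.trans (sum_univ_inst _ inferInstance _) ?_
      refine Eq.trans (Fintype.sum_bijective (piEquiv t scs hd) (Equiv.bijective _) _
        (fun y => ∏ j, (child j).eval (patch (scs j) (y j))) fun x => ?_) ?_
      · refine Finset.prod_congr rfl fun j _ => eval_congr (child j) fun i hi => ?_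
        simp only [patch, piEquiv]
        rw [dif_pos hi, dif_pos (Set.mem_iUnion.2 ⟨j, hi⟩)]
        rfl
      · beta_reduce
        rw [← Fintype.prod_sum
          (fun j (y : ∀ i : scs j, α i) => (child j).eval (patch (scs j) y))]
        refine Eq.trans (Finset.prod_congr rfl fun j _ => ih j (hS j)) Finset.prod_const_one

end Aux

/-- If `S` is an SPN whose scope is all of `ι` and all of whose leaf
distributions are normalized, then `Σ_x S(x) = 1`. -/
theorem stmt11 {ι : Type} [Fintype ι] [DecidableEq ι] {α : ι → Type}
    [∀ i, Fintype (α i)] [∀ i, Nonempty (α i)]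
    (S : SPN ι α Set.univ) (hS : S.normalized) :
    ∑ x : ∀ i, α i, S.eval x = 1 := by
  classical
  have hbij : Function.Bijective
      (fun (y : ∀ i : (Set.univ : Set ι), α i) (i : ι) => y ⟨i, trivial⟩) := by
    constructor
    · intro y y' h
      funext iv
      obtain ⟨i, hi⟩ := iv
      exact congrFun h i
    · intro g
      exact ⟨fun i => g i.1, rfl⟩
  have hcomp : ∀ (y : ∀ i : (Set.univ : Set ι), α i),
      S.eval (patch Set.univ y) = S.eval (fun i => y ⟨i, trivial⟩) := by
    intro y
    refine eval_congr S fun i _ => ?_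
    simp only [patch]
    rw [dif_pos (Set.mem_univ i)]
  refine Eq.trans ?_ (sum_patch_eval S hS)
  refine Eq.trans (Fintype.sum_bijective _ hbij _ _ hcomp).symm ?_
  exact sum_univ_inst inferInstance _ _
end
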